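/- arXiv:2604.09340 — 4 statements merged into one kernel-verified Lean document; each statement's English description precedes it below -/
import Mathlib

section
/- Fix k ∈ [0,1/2]. Then for every φ ∈ Φ one has J_k(φ) ≤ (1−k)·π(1), and equality holds if and only if φ(u) = 1 for every u ∈ [0,1]. In other words, the constant-one profile (corresponding to the degenerate market composition at the top type) is the unique maximizer of J_k on Φ when the weight on consumer surplus is at most one half. -/
open MeasureTheory Set Filter

namespace Screening

/-- Assumption 1 on the cost function. -/
structure Assumption1 (c : ℝ → ℝ) (Qbar qbar : ℝ) : Prop where
  contDiff2 : ContDiffOn ℝ 2 c (Set.Ioi 0)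
  strictMono : StrictMonoOn c (Set.Ici 0)
  strictConvex : StrictConvexOn ℝ (Set.Ici 0) c
  zero_val : c 0 = 0
  deriv_zero : derivWithin c (Set.Ici 0) 0 = 0
  Qbar_pos : 0 < Qbar
  second_deriv_pos : ∀ x ∈ Set.Ioc (0:ℝ) Qbar, 0 < deriv (deriv c) x
  qbar_pos : 0 < qbar
  qbar_lt_Qbar : qbar < Qbar
  deriv_qbar : deriv c qbar = 1

/-- Assumption 2 (curvature condition). -/
structure Assumption2 (c : ℝ → ℝ) (qbar : ℝ) : Prop where
  contDiff3 : ContDiffOn ℝ 3 c (Set.Ioi 0)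
  curvature : ∀ x ∈ Set.Ioc (0:ℝ) qbar,
    -x * deriv (deriv (deriv c)) x / deriv (deriv c) x < 2

/-- `q` is the (unique) pointwise maximizer of `x ↦ z·x − c x` over `[0, qbar]`. -/
def IsArgmaxSelection (c : ℝ → ℝ) (qbar : ℝ) (q : ℝ → ℝ) : Prop :=
  ∀ z : ℝ, q z ∈ Set.Icc (0:ℝ) qbar ∧
    ∀ x ∈ Set.Icc (0:ℝ) qbar, z * x - c x ≤ z * q z - c (q z)

/-- Indirect profit `π(z) = z·q(z) − c(q(z))`. -/
noncomputable def piFun (c q : ℝ → ℝ) (z : ℝ) : ℝ := z * q z - c (q z)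

/-- Membership in Φ: nondecreasing, `[0,1]`-valued, right-continuous on `[0,1)`. -/
def MemPhi (φ : ℝ → ℝ) : Prop :=
  (∀ u ∈ Set.Icc (0:ℝ) 1, φ u ∈ Set.Icc (0:ℝ) 1) ∧
  MonotoneOn φ (Set.Icc (0:ℝ) 1) ∧
  ∀ u ∈ Set.Ico (0:ℝ) 1, ContinuousWithinAt φ (Set.Ici u) u

/-- The induced quantile `Q_φ`. -/
noncomputable def Qfun (φ : ℝ → ℝ) (u : ℝ) : ℝ :=
  if u < 1 then (∫ t in u..1, φ t) / (1 - u)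
  else limUnder (nhdsWithin 1 (Set.Iio 1))
    (fun v => (∫ t in v..1, φ t) / (1 - v))

/-- Seller profit `Π(φ)`. -/
noncomputable def Profit (c q φ : ℝ → ℝ) : ℝ := ∫ u in (0:ℝ)..1, piFun c q (φ u)

/-- Consumer surplus `CS(φ)`. -/
noncomputable def CS (q φ : ℝ → ℝ) : ℝ :=
  ∫ u in (0:ℝ)..1, (Qfun φ u - φ u) * q (φ u)

/-- Weighted objective `J_k(φ)`. -/
noncomputable def Jfun (c q : ℝ → ℝ) (k : ℝ) (φ : ℝ → ℝ) : ℝ :=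
  k * CS q φ + (1 - k) * Profit c q φ

/-- Cumulative spillover `A_φ(u)`. -/
noncomputable def Afun (q φ : ℝ → ℝ) (u : ℝ) : ℝ :=
  ∫ s in (0:ℝ)..u, q (φ s) / (1 - s)

/-- `q'(z) = 1 / c''(q(z))`. -/
noncomputable def qprime (c q : ℝ → ℝ) (z : ℝ) : ℝ := (deriv (deriv c) (q z))⁻¹

/-- First-variation density `H_k[φ](u)`. -/
noncomputable def Hfun (c q : ℝ → ℝ) (k : ℝ) (φ : ℝ → ℝ) (u : ℝ) : ℝ :=
  k * Afun q φ u + k * (Qfun φ u - φ u) * qprime c q (φ u) + (1 - 2*k) * q (φ u)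



section Aux

variable {c q : ℝ → ℝ} {Qbar qbar : ℝ}

lemma pi_key (hq : IsArgmaxSelection c qbar q) (z z' : ℝ) :
    z' * q z - c (q z) ≤ piFun c q z' :=
  (hq z').2 _ (hq z).1

lemma q_nonneg (hq : IsArgmaxSelection c qbar q) (z : ℝ) : 0 ≤ q z := (hq z).1.1

lemma q_mono (hq : IsArgmaxSelection c qbar q) : Monotone q := by
  intro a b hab
  rcases eq_or_lt_of_le hab with rfl | hab'
  · exact le_refl _
  by_contra h
  push_neg at h
  have h1 := (hq a).2 (q b) (hq b).1
  have h2 := (hq b).2 (q a) (hq a).1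
  nlinarith [mul_pos (sub_pos.mpr hab') (sub_pos.mpr h)]

lemma pi_mono (hq : IsArgmaxSelection c qbar q) : Monotone (piFun c q) := by
  intro a b hab
  have h1 : a * q a - c (q a) ≤ b * q a - c (q a) := by
    nlinarith [q_nonneg hq a]
  exact le_trans h1 (pi_key hq a b)

lemma c_lt_qbar (hA1 : Assumption1 c Qbar qbar) : c qbar < qbar := by
  have hdiff : DifferentiableAt ℝ c qbar :=
    (hA1.contDiff2.differentiableOn (by norm_num)).differentiableAt
      (Ioi_mem_nhds hA1.qbar_pos)
  have hs := hA1.strictConvex.slope_lt_deriv (self_mem_Ici)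
      (le_of_lt hA1.qbar_pos) hA1.qbar_pos hdiff
  rw [hA1.deriv_qbar, slope_def_field, hA1.zero_val] at hs
  rw [sub_zero, sub_zero, div_lt_one hA1.qbar_pos] at hs
  exact hs

lemma pi_one_pos (hA1 : Assumption1 c Qbar qbar) (hq : IsArgmaxSelection c qbar q) :
    0 < piFun c q 1 := by
  have h := (hq 1).2 qbar ⟨le_of_lt hA1.qbar_pos, le_refl _⟩
  have h2 := c_lt_qbar hA1
  simp only [piFun]
  nlinarith

lemma eq_one_of_pi_eq (hA1 : Assumption1 c Qbar qbar) (hq : IsArgmaxSelection c qbar q)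
    {z : ℝ} (hz : z ≤ 1) (hpi : piFun c q z = piFun c q 1) : z = 1 := by
  by_contra h
  have hz1 : z < 1 := lt_of_le_of_ne hz h
  have hk := pi_key hq z 1
  have hqz : q z = 0 := by
    have h0 := q_nonneg hq z
    simp only [piFun] at hpi hk
    nlinarith
  have hpz : piFun c q z = 0 := by simp [piFun, hqz, hA1.zero_val]
  have hpos := pi_one_pos hA1 hq
  rw [hpz] at hpi
  linarith

lemma exists_mem_Ioo_of_ae {P : ℝ → Prop}
    (h : ∀ᵐ u ∂(volume : Measure ℝ), u ∈ Set.Ioc (0:ℝ) 1 → P u)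
    {b : ℝ} (hb0 : 0 < b) (hb1 : b ≤ 1) : ∃ u, u ∈ Set.Ioo 0 b ∧ P u := by
  by_contra hcon
  push_neg at hcon
  have hsub : Set.Ioo (0:ℝ) b ⊆ {u | ¬(u ∈ Set.Ioc (0:ℝ) 1 → P u)} := by
    intro u hu himp
    exact hcon u hu (himp ⟨hu.1, hu.2.le.trans hb1⟩)
  have h0 : volume {u | ¬(u ∈ Set.Ioc (0:ℝ) 1 → P u)} = 0 := ae_iff.mp h
  have hm := measure_mono_null hsub h0
  rw [Real.volume_Ioo] at hm
  rw [ENNReal.ofReal_eq_zero] at hm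
  linarith

lemma one_on_Icc {φ : ℝ → ℝ}
    (hφmem : ∀ u ∈ Set.Icc (0:ℝ) 1, φ u ∈ Set.Icc (0:ℝ) 1)
    (hφmono : MonotoneOn φ (Set.Icc (0:ℝ) 1))
    (hφrc : ∀ u ∈ Set.Ico (0:ℝ) 1, ContinuousWithinAt φ (Set.Ici u) u)
    (h : ∀ u ∈ Set.Ioo (0:ℝ) 1, φ u = 1) :
    ∀ u ∈ Set.Icc (0:ℝ) 1, φ u = 1 := by
  have h1 : φ 1 = 1 := by
    have h2 := h (1/2) (by norm_num)
    have h3 := hφmono (by norm_num : (1/2:ℝ) ∈ Set.Icc (0:ℝ) 1)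
      (by norm_num : (1:ℝ) ∈ Set.Icc (0:ℝ) 1) (by norm_num)
    have h4 := (hφmem 1 (by norm_num)).2
    linarith
  have h0 : φ 0 = 1 := by
    have hrc := hφrc 0 (by norm_num)
    have htd : Tendsto φ (nhdsWithin 0 (Set.Ioo (0:ℝ) 1)) (nhds (φ 0)) :=
      hrc.tendsto.mono_left (nhdsWithin_mono 0 (fun x hx => hx.1.le))
    haveI hne : (nhdsWithin (0:ℝ) (Set.Ioo (0:ℝ) 1)).NeBot := by
      apply mem_closure_iff_nhdsWithin_neBot.mp
      rw [closure_Ioo (by norm_num : (0:ℝ) ≠ 1)]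
      exact ⟨le_refl 0, by norm_num⟩
    have htd1 : Tendsto φ (nhdsWithin 0 (Set.Ioo (0:ℝ) 1)) (nhds 1) := by
      apply Tendsto.congr' ?_ tendsto_const_nhds
      filter_upwards [self_mem_nhdsWithin] with x hx
      exact (h x hx).symm
    exact tendsto_nhds_unique htd htd1
  intro u hu
  rcases eq_or_lt_of_le hu.1 with he | hl
  · rw [← he]; exact h0
  rcases eq_or_lt_of_le hu.2 with he2 | hl2
  · rw [he2]; exact h1
  · exact h u ⟨hl, hl2⟩

end Aux

/-- For `k ∈ [0,1/2]`, every `φ ∈ Φ` satisfies `J_k(φ) ≤ (1−k)·π(1)`,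
with equality iff `φ ≡ 1` on `[0,1]`; i.e. the constant-one profile is the unique
maximizer of `J_k` on `Φ`. -/
theorem profit_biased_top_type_optimal
    (c : ℝ → ℝ) (Qbar qbar : ℝ) (q : ℝ → ℝ)
    (hA1 : Assumption1 c Qbar qbar)
    (hq : IsArgmaxSelection c qbar q)
    (k : ℝ) (hk : k ∈ Set.Icc (0:ℝ) (1/2)) :
    ∀ φ : ℝ → ℝ, MemPhi φ →
      Jfun c q k φ ≤ (1 - k) * piFun c q 1 ∧
      (Jfun c q k φ = (1 - k) * piFun c q 1 ↔ ∀ u ∈ Set.Icc (0:ℝ) 1, φ u = 1) := by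
  obtain ⟨hk0, hk2⟩ := hk
  intro φ hφ
  obtain ⟨hφmem, hφmono, hφrc⟩ := hφ
  have hpi1 : 0 < piFun c q 1 := pi_one_pos hA1 hq
  have huIcc : Set.uIcc (0:ℝ) 1 = Set.Icc 0 1 := uIcc_of_le (by norm_num)
  -- integrability of the profit integrand
  have hφii : IntervalIntegrable φ volume 0 1 := by
    apply MonotoneOn.intervalIntegrable; rw [huIcc]; exact hφmono
  have hqφmono : MonotoneOn (fun u => q (φ u)) (Set.Icc (0:ℝ) 1) :=
    fun a ha b hb hab => q_mono hq (hφmono ha hb hab)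
  have hqφii : IntervalIntegrable (fun u => q (φ u)) volume 0 1 := by
    apply MonotoneOn.intervalIntegrable; rw [huIcc]; exact hqφmono
  have hfPii : IntervalIntegrable (fun u => piFun c q (φ u)) volume 0 1 := by
    have h1 : IntervalIntegrable (fun u => φ u * q (φ u)) volume 0 1 := by
      apply MonotoneOn.intervalIntegrable; rw [huIcc]
      intro a ha b hb hab
      have e1 : φ a ≤ φ b := hφmono ha hb hab
      have e2 : q (φ a) ≤ q (φ b) := hqφmono ha hb hab
      have e3 : (0:ℝ) ≤ φ a := (hφmem a ha).1
      show φ a * q (φ a) ≤ φ b * q (φ b)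
      nlinarith [q_nonneg hq (φ a), q_nonneg hq (φ b)]
    have h2 : IntervalIntegrable (fun u => c (q (φ u))) volume 0 1 := by
      apply MonotoneOn.intervalIntegrable; rw [huIcc]
      intro a ha b hb hab
      exact hA1.strictMono.monotoneOn (q_nonneg hq (φ a)) (q_nonneg hq (φ b))
        (hqφmono ha hb hab)
    have h3 : (fun u => piFun c q (φ u)) = fun u => φ u * q (φ u) - c (q (φ u)) := rfl
    rw [h3]
    exact h1.sub h2
  -- basic facts about Qfun on [0,1)
  have hQfun_eq : ∀ u ∈ Set.Ico (0:ℝ) 1, Qfun φ u = (∫ t in u..1, φ t) / (1 - u) := by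
    intro u hu; simp [Qfun, hu.2]
  have hφii' : ∀ u ∈ Set.Ico (0:ℝ) 1, IntervalIntegrable φ volume u 1 := by
    intro u hu
    apply MonotoneOn.intervalIntegrable
    apply hφmono.mono
    rw [uIcc_of_le hu.2.le]
    exact Icc_subset_Icc hu.1 le_rfl
  have hQbounds : ∀ u ∈ Set.Ico (0:ℝ) 1, φ u ≤ Qfun φ u ∧ Qfun φ u ≤ 1 := by
    intro u hu
    have h1u : (0:ℝ) < 1 - u := by linarith [hu.2]
    have hii := hφii' u hu
    have hIcc : Set.Icc u 1 ⊆ Set.Icc (0:ℝ) 1 := Icc_subset_Icc hu.1 le_rfl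
    have hup : (∫ t in u..1, φ t) ≤ 1 - u := by
      have h := intervalIntegral.integral_mono_on hu.2.le hii intervalIntegrable_const
        (fun t ht => (hφmem t (hIcc ht)).2)
      simpa using h
    have hlow : φ u * (1 - u) ≤ ∫ t in u..1, φ t := by
      have h := intervalIntegral.integral_mono_on hu.2.le intervalIntegrable_const hii
        (fun t ht => hφmono ⟨hu.1, hu.2.le⟩ (hIcc ht) ht.1)
      have h2 : (∫ _t in u..1, φ u) = (1 - u) * φ u := by simp [mul_comm]
      rw [h2] at h
      linarith
    rw [hQfun_eq u hu]
    constructor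
    · rw [le_div_iff₀ h1u]; exact hlow
    · rw [div_le_one h1u]; exact hup
  -- pointwise inequalities
  have hpt : ∀ u ∈ Set.Ioo (0:ℝ) 1,
      ((Qfun φ u - φ u) * q (φ u) + piFun c q (φ u) ≤ piFun c q 1 ∧
       piFun c q (φ u) ≤ piFun c q 1) := by
    intro u hu
    obtain ⟨hlb, hub⟩ := hQbounds u ⟨hu.1.le, hu.2⟩
    have hφ1 : φ u ≤ 1 := (hφmem u ⟨hu.1.le, hu.2.le⟩).2
    refine ⟨?_, pi_mono hq hφ1⟩
    have h1 : Qfun φ u * q (φ u) - c (q (φ u)) ≤ piFun c q (Qfun φ u) :=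
      pi_key hq (φ u) (Qfun φ u)
    have h2 : piFun c q (Qfun φ u) ≤ piFun c q 1 := pi_mono hq hub
    have h3 : (Qfun φ u - φ u) * q (φ u) + piFun c q (φ u)
        = Qfun φ u * q (φ u) - c (q (φ u)) := by simp only [piFun]; ring
    linarith
  have hbound : ∀ u ∈ Set.Ioo (0:ℝ) 1,
      k * ((Qfun φ u - φ u) * q (φ u)) + (1 - k) * piFun c q (φ u)
        ≤ (1 - k) * piFun c q 1 := by
    intro u hu
    obtain ⟨hA, hB⟩ := hpt u hu
    have pA := mul_le_mul_of_nonneg_left hA hk0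
    have pB := mul_le_mul_of_nonneg_left hB (by linarith : (0:ℝ) ≤ 1 - 2*k)
    nlinarith [pA, pB]
  -- measurability / integrability of the CS integrand
  have haeIoo : ∀ᵐ u ∂(volume.restrict (Set.Ioc (0:ℝ) 1)), u ∈ Set.Ioo (0:ℝ) 1 := by
    rw [← Measure.restrict_congr_set Ioo_ae_eq_Ioc]
    exact ae_restrict_mem measurableSet_Ioo
  have haeIcc : ∀ᵐ u ∂(volume.restrict (Set.Icc (0:ℝ) 1)), u ∈ Set.Ioo (0:ℝ) 1 := by
    rw [← Measure.restrict_congr_set Ioo_ae_eq_Icc]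
    exact ae_restrict_mem measurableSet_Ioo
  have hGcont : ContinuousOn (fun u => ∫ t in u..(1:ℝ), φ t) (Set.Icc 0 1) := by
    have h1 : ContinuousOn (fun u => ∫ t in (1:ℝ)..u, φ t) (Set.Icc 0 1) := by
      have h := intervalIntegral.continuousOn_primitive_interval' hφii
        (by rw [huIcc]; exact right_mem_Icc.mpr (by norm_num))
      rwa [huIcc] at h
    have h2 := h1.neg
    apply h2.congr
    intro u _
    show (∫ t in u..(1:ℝ), φ t) = -∫ t in (1:ℝ)..u, φ t
    exact intervalIntegral.integral_symm 1 u
  have hQmeasAux : AEStronglyMeasurable (fun u => (∫ t in u..(1:ℝ), φ t) / (1 - u))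
      (volume.restrict (Set.Ioo (0:ℝ) 1)) := by
    apply ContinuousOn.aestronglyMeasurable ?_ measurableSet_Ioo
    apply ContinuousOn.div ((hGcont.mono Ioo_subset_Icc_self))
      ((continuous_const.sub continuous_id).continuousOn)
    intro x hx
    exact sub_ne_zero.mpr (ne_of_gt hx.2)
  have hQae : AEStronglyMeasurable (Qfun φ) (volume.restrict (Set.Ioc (0:ℝ) 1)) := by
    have h1 : AEStronglyMeasurable (fun u => (∫ t in u..(1:ℝ), φ t) / (1 - u))
        (volume.restrict (Set.Ioc (0:ℝ) 1)) := by
      rwa [Measure.restrict_congr_set Ioo_ae_eq_Ioc] at hQmeasAux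
    apply h1.congr
    filter_upwards [haeIoo] with u hu
    simp [Qfun, hu.2]
  have hφae := hφii.1.aestronglyMeasurable
  have hqφae := hqφii.1.1
  have hfCSii : IntervalIntegrable (fun u => (Qfun φ u - φ u) * q (φ u)) volume 0 1 := by
    rw [intervalIntegrable_iff_integrableOn_Ioc_of_le (by norm_num)]
    have hbase : AEStronglyMeasurable (fun u => (Qfun φ u - φ u) * q (φ u))
        (volume.restrict (Set.Ioc (0:ℝ) 1)) := (hQae.sub hφae).mul hqφae
    apply Integrable.mono' (integrable_const qbar) hbase
    filter_upwards [haeIoo] with u hu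
    obtain ⟨hlb, hub⟩ := hQbounds u ⟨hu.1.le, hu.2⟩
    have hqmem := (hq (φ u)).1
    have hφmem' := hφmem u ⟨hu.1.le, hu.2.le⟩
    rw [Real.norm_eq_abs, abs_of_nonneg (mul_nonneg (by linarith) hqmem.1)]
    nlinarith [hqmem.1, hqmem.2, hφmem'.1]
  -- combined objective
  have hgii : IntervalIntegrable
      (fun u => k * ((Qfun φ u - φ u) * q (φ u)) + (1 - k) * piFun c q (φ u)) volume 0 1 :=
    (hfCSii.const_mul k).add (hfPii.const_mul (1-k))
  have hJeq : Jfun c q k φ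
      = ∫ u in (0:ℝ)..1, (k * ((Qfun φ u - φ u) * q (φ u)) + (1 - k) * piFun c q (φ u)) := by
    rw [intervalIntegral.integral_add (hfCSii.const_mul k) (hfPii.const_mul (1-k)),
      intervalIntegral.integral_const_mul, intervalIntegral.integral_const_mul]
    simp only [Jfun, CS, Profit]
  have hle : Jfun c q k φ ≤ (1 - k) * piFun c q 1 := by
    rw [hJeq]
    have hc : (∫ _u in (0:ℝ)..1, (1 - k) * piFun c q 1) = (1 - k) * piFun c q 1 := by simp
    rw [← hc]
    apply intervalIntegral.integral_mono_ae_restrict (by norm_num) hgii intervalIntegrable_const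
    filter_upwards [haeIcc] with u hu
    exact hbound u hu
  refine ⟨hle, ?_, ?_⟩
  · -- equality implies φ ≡ 1
    intro hEq
    have hgii2 : IntervalIntegrable (fun u => (1 - k) * piFun c q 1
        - (k * ((Qfun φ u - φ u) * q (φ u)) + (1 - k) * piFun c q (φ u))) volume 0 1 :=
      intervalIntegrable_const.sub hgii
    have hint0 : (∫ u in (0:ℝ)..1, ((1 - k) * piFun c q 1
        - (k * ((Qfun φ u - φ u) * q (φ u)) + (1 - k) * piFun c q (φ u)))) = 0 := by
      rw [intervalIntegral.integral_sub intervalIntegrable_const hgii, ← hJeq, hEq]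
      simp
    have hgnn : 0 ≤ᵐ[volume.restrict (Set.Ioc (0:ℝ) 1)] (fun u => (1 - k) * piFun c q 1
        - (k * ((Qfun φ u - φ u) * q (φ u)) + (1 - k) * piFun c q (φ u))) := by
      filter_upwards [haeIoo] with u hu
      have h := hbound u hu
      simp only [Pi.zero_apply]
      linarith
    have hg0 := (intervalIntegral.integral_eq_zero_iff_of_le_of_nonneg_ae
      (by norm_num) hgnn hgii2).mp hint0
    have hvol : ∀ᵐ u ∂(volume : Measure ℝ), u ∈ Set.Ioc (0:ℝ) 1 →
        k * ((Qfun φ u - φ u) * q (φ u)) + (1 - k) * piFun c q (φ u)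
          = (1 - k) * piFun c q 1 := by
      apply ae_imp_of_ae_restrict
      filter_upwards [hg0] with u hu
      simp only [Pi.zero_apply] at hu
      linarith
    have hmain : ∀ u ∈ Set.Ioo (0:ℝ) 1,
        (k * ((Qfun φ u - φ u) * q (φ u)) + (1 - k) * piFun c q (φ u)
          = (1 - k) * piFun c q 1) →
        ((k < 1/2 → φ u = 1) ∧ (k = 1/2 → (∫ t in u..1, φ t) = 1 - u)) := by
      intro u hu heq
      obtain ⟨hA, hB⟩ := hpt u hu
      have hφ1 := hφmem u ⟨hu.1.le, hu.2.le⟩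
      constructor
      · intro hklt
        have pA := mul_le_mul_of_nonneg_left hA hk0
        have hge : piFun c q 1 ≤ piFun c q (φ u) := by nlinarith [pA, heq, hklt]
        exact eq_one_of_pi_eq hA1 hq hφ1.2 (le_antisymm hB hge)
      · intro hkeq
        subst hkeq
        have hAeq : (Qfun φ u - φ u) * q (φ u) + piFun c q (φ u) = piFun c q 1 := by
          linarith
        have h1 : Qfun φ u * q (φ u) - c (q (φ u)) ≤ piFun c q (Qfun φ u) :=
          pi_key hq (φ u) (Qfun φ u)
        obtain ⟨hlb, hub⟩ := hQbounds u ⟨hu.1.le, hu.2⟩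
        have h2 : piFun c q (Qfun φ u) ≤ piFun c q 1 := pi_mono hq hub
        have hcomb : (Qfun φ u - φ u) * q (φ u) + piFun c q (φ u)
            = Qfun φ u * q (φ u) - c (q (φ u)) := by simp only [piFun]; ring
        have hQeq : piFun c q (Qfun φ u) = piFun c q 1 := le_antisymm h2 (by linarith)
        have hQ1 : Qfun φ u = 1 := eq_one_of_pi_eq hA1 hq hub hQeq
        have h1u : (0:ℝ) < 1 - u := by linarith [hu.2]
        rw [hQfun_eq u ⟨hu.1.le, hu.2⟩] at hQ1
        rw [div_eq_one_iff_eq (ne_of_gt h1u)] at hQ1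
        exact hQ1
    have honeIoo : ∀ u ∈ Set.Ioo (0:ℝ) 1, φ u = 1 := by
      rcases lt_or_eq_of_le hk2 with hklt | hkeq
      · have hvol' : ∀ᵐ u ∂(volume : Measure ℝ), u ∈ Set.Ioc (0:ℝ) 1 →
            (u ∈ Set.Ioo (0:ℝ) 1 → φ u = 1) := by
          filter_upwards [hvol] with u himp hIoc hIoo
          exact (hmain u hIoo (himp hIoc)).1 hklt
        intro u hu
        obtain ⟨v, hv, hveq⟩ := exists_mem_Ioo_of_ae hvol' hu.1 hu.2.le
        have hv1 : φ v = 1 := hveq ⟨hv.1, hv.2.trans hu.2⟩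
        have hm := hφmono ⟨hv.1.le, (hv.2.trans hu.2).le⟩ ⟨hu.1.le, hu.2.le⟩ hv.2.le
        have hub := (hφmem u ⟨hu.1.le, hu.2.le⟩).2
        linarith
      · have hvol' : ∀ᵐ u ∂(volume : Measure ℝ), u ∈ Set.Ioc (0:ℝ) 1 →
            (u ∈ Set.Ioo (0:ℝ) 1 → (∫ t in u..1, φ t) = 1 - u) := by
          filter_upwards [hvol] with u himp hIoc hIoo
          exact (hmain u hIoo (himp hIoc)).2 hkeq
        intro u hu
        obtain ⟨v, hv, hveq⟩ := exists_mem_Ioo_of_ae hvol' hu.1 hu.2.le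
        have hvIoo : v ∈ Set.Ioo (0:ℝ) 1 := ⟨hv.1, hv.2.trans hu.2⟩
        have hI : (∫ t in v..1, φ t) = 1 - v := hveq hvIoo
        have hii1 : IntervalIntegrable φ volume v u := by
          apply MonotoneOn.intervalIntegrable
          apply hφmono.mono
          rw [uIcc_of_le hv.2.le]
          exact Icc_subset_Icc hv.1.le hu.2.le
        have hii2 : IntervalIntegrable φ volume u 1 := hφii' u ⟨hu.1.le, hu.2⟩
        have hsplit := intervalIntegral.integral_add_adjacent_intervals hii1 hii2
        have hb1 : (∫ t in v..u, φ t) ≤ (u - v) * φ u := by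
          have h := intervalIntegral.integral_mono_on hv.2.le hii1 intervalIntegrable_const
            (fun t ht => hφmono ⟨le_trans hv.1.le ht.1, le_trans ht.2 hu.2.le⟩
              ⟨hu.1.le, hu.2.le⟩ ht.2)
          have h2 : (∫ _t in v..u, φ u) = (u - v) * φ u := by simp [mul_comm]
          rw [h2] at h
          linarith
        have hb2 : (∫ t in u..1, φ t) ≤ 1 - u := by
          have h := intervalIntegral.integral_mono_on hu.2.le hii2 intervalIntegrable_const
            (fun t ht => (hφmem t ⟨le_trans hu.1.le ht.1, ht.2⟩).2)
          simpa using h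
        have hub := (hφmem u ⟨hu.1.le, hu.2.le⟩).2
        have hge : (1:ℝ) ≤ φ u := by nlinarith [hI, hsplit, hb1, hb2, hv.2]
        linarith
    exact one_on_Icc hφmem hφmono hφrc honeIoo
  · -- φ ≡ 1 implies equality
    intro hone
    have hint : ∀ v ∈ Set.Ico (0:ℝ) 1, (∫ t in v..1, φ t) = 1 - v := by
      intro v hv
      have heqon : Set.EqOn φ (fun _ => (1:ℝ)) (Set.uIcc v 1) := by
        rw [uIcc_of_le hv.2.le]
        intro t ht
        exact hone t ⟨le_trans hv.1 ht.1, ht.2⟩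
      rw [intervalIntegral.integral_congr heqon]
      simp
    have hQone : ∀ u ∈ Set.Icc (0:ℝ) 1, Qfun φ u = 1 := by
      intro u hu
      rcases lt_or_eq_of_le hu.2 with h1 | h1
      · rw [hQfun_eq u ⟨hu.1, h1⟩, hint u ⟨hu.1, h1⟩]
        rw [div_self (ne_of_gt (by linarith : (0:ℝ) < 1 - u))]
      · rw [h1]
        have hQ1e : Qfun φ 1 = limUnder (nhdsWithin 1 (Set.Iio 1))
            (fun v => (∫ t in v..1, φ t) / (1 - v)) := by
          simp [Qfun]
        rw [hQ1e]
        apply Filter.Tendsto.limUnder_eq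
        apply Tendsto.congr' ?_ tendsto_const_nhds
        have hmem : Set.Ioo (0:ℝ) 1 ∈ nhdsWithin (1:ℝ) (Set.Iio 1) := by
          rw [mem_nhdsWithin]
          exact ⟨Set.Ioi 0, isOpen_Ioi, by norm_num, fun x hx => ⟨hx.1, hx.2⟩⟩
        filter_upwards [hmem] with v hv
        rw [hint v ⟨hv.1.le, hv.2⟩]
        rw [div_self (ne_of_gt (by linarith [hv.2] : (0:ℝ) < 1 - v))]
    have hCS0 : CS q φ = 0 := by
      simp only [CS]
      have heqon : Set.EqOn (fun u => (Qfun φ u - φ u) * q (φ u)) (fun _ => (0:ℝ))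
          (Set.uIcc (0:ℝ) 1) := by
        rw [huIcc]
        intro u hu
        simp only
        rw [hQone u hu, hone u hu]
        ring
      rw [intervalIntegral.integral_congr heqon]
      simp
    have hP1 : Profit c q φ = piFun c q 1 := by
      simp only [Profit]
      have heqon : Set.EqOn (fun u => piFun c q (φ u)) (fun _ => piFun c q 1)
          (Set.uIcc (0:ℝ) 1) := by
        rw [huIcc]
        intro u hu
        simp only
        rw [hone u hu]
      rw [intervalIntegral.integral_congr heqon]
      simp
    simp only [Jfun]
    rw [hCS0, hP1]
    ring


end Screening
end

section
/- Fix k ∈ (1/2,1]. Then the constant-one profile φ ≡ 1 does not maximize J_k over Φ: there exists ψ ∈ Φ with J_k(ψ) > J_k(1). (In fact, for a ∈ (0,1) and ε ∈ (0,1) sufficiently small, the profile equal to 1−ε on [0,a) and 1 on [a,1] yields a strictly higher value of J_k.) -/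
open MeasureTheory Set Filter

namespace Screening

set_option maxHeartbeats 1000000 in
/-- For `k ∈ (1/2,1]`, the constant-one profile does not maximize `J_k`
over `Φ`: some `ψ ∈ Φ` achieves a strictly larger value. -/
theorem const_one_not_optimal
    (c : ℝ → ℝ) (Qbar qbar : ℝ) (q : ℝ → ℝ)
    (hA1 : Assumption1 c Qbar qbar)
    (hq : IsArgmaxSelection c qbar q)
    (k : ℝ) (hk : k ∈ Set.Ioc (1/2 : ℝ) 1) :
    ∃ ψ : ℝ → ℝ, MemPhi ψ ∧ Jfun c q k (fun _ => 1) < Jfun c q k ψ := by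
  obtain ⟨hk1, hk2⟩ := hk
  have hk0 : (0:ℝ) < k := by linarith
  have hqbar := hA1.qbar_pos
  -- parameters
  set a : ℝ := (2*k-1)/(4*k) with ha_def
  have ha0 : 0 < a := div_pos (by linarith) (by linarith)
  have ha1 : a < 1 := by rw [ha_def, div_lt_one (by linarith)]; linarith
  have h1a : (1:ℝ) - a = (2*k+1)/(4*k) := by
    rw [ha_def]; field_simp; ring
  have hkey : (1 - k) < k * ((1-a)*(1-a)) := by
    have h2k : (0:ℝ) < 2*k - 1 := by linarith
    have h10k : (0:ℝ) < 10*k - 1 := by linarith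
    have heq : k * ((1-a)*(1-a)) = (2*k+1)^2 / (16*k) := by
      rw [h1a]; field_simp; ring
    rw [heq, lt_div_iff₀ (by linarith)]
    nlinarith [mul_pos h2k h10k]
  set δ : ℝ := a * qbar with hδ_def
  have hδ0 : 0 < δ := mul_pos ha0 hqbar
  have hδlt : δ < qbar := by
    nlinarith
  -- differentiability of c at qbar
  have hdiff : DifferentiableAt ℝ c qbar := by
    have h1 : DifferentiableOn ℝ c (Set.Ioi 0) :=
      hA1.contDiff2.differentiableOn (by norm_num)
    exact h1.differentiableAt (isOpen_Ioi.mem_nhds hA1.qbar_pos)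
  -- slope bound: s < 1
  have hmemδ : qbar - δ ∈ Set.Ici (0:ℝ) := by simp; linarith
  have hmemq : qbar ∈ Set.Ici (0:ℝ) := by simp; linarith
  have hslope : c qbar - c (qbar - δ) < δ := by
    have := hA1.strictConvex.slope_lt_deriv hmemδ hmemq (by linarith) hdiff
    rw [hA1.deriv_qbar, slope_def_field] at this
    have h2 : (c qbar - c (qbar - δ)) / δ < 1 := by
      convert this using 2; ring
    calc c qbar - c (qbar - δ) = (c qbar - c (qbar - δ))/δ * δ := by field_simp
    _ < 1 * δ := by exact mul_lt_mul_of_pos_right h2 hδ0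
    _ = δ := one_mul δ
  have hspos : 0 < c qbar - c (qbar - δ) := by
    have := hA1.strictMono hmemδ hmemq (by linarith)
    linarith
  set s : ℝ := (c qbar - c (qbar - δ))/δ with hs_def
  have hs0 : 0 < s := div_pos hspos hδ0
  have hs1 : s < 1 := by rw [hs_def, div_lt_one hδ0]; exact hslope
  set ε : ℝ := (1 - s)/2 with hε_def
  have hε0 : 0 < ε := by rw [hε_def]; linarith
  have hε1 : ε < 1 := by rw [hε_def]; linarith
  -- the key argmax bound : q (1-ε) > qbar - δ
  set qq : ℝ := q (1 - ε) with hqq_def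
  have hqqmem : qq ∈ Set.Icc (0:ℝ) qbar := (hq (1-ε)).1
  have hqq3 : (1-a) * qbar < qq := by
    by_contra hcon
    push_neg at hcon
    have hy : qq ≤ qbar - δ := by rw [hδ_def]; nlinarith
    have hyq : δ ≤ qbar - qq := by linarith
    have hy0 : 0 ≤ qq := hqqmem.1
    -- optimality against qbar
    have hopt := (hq (1-ε)).2 qbar ⟨le_of_lt hqbar, le_refl _⟩
    -- convexity : c qbar - c qq ≤ s * (qbar - qq)
    have hconv : c qbar - c qq ≤ s * (qbar - qq) := by
      rcases eq_or_lt_of_le hy with heq | hlt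
      · rw [heq]
        rw [hs_def]
        rw [div_mul_eq_mul_div, le_div_iff₀ hδ0]
        nlinarith
      · set t : ℝ := δ / (qbar - qq) with ht_def
        have hqy : 0 < qbar - qq := by linarith
        have ht0 : 0 ≤ t := le_of_lt (div_pos hδ0 hqy)
        have htδ : t * (qbar - qq) = δ := by rw [ht_def]; field_simp
        have ht1 : 0 ≤ 1 - t := by
          have : t ≤ 1 := by rw [ht_def, div_le_one hqy]; linarith
          linarith
        have hcomb := hA1.strictConvex.convexOn.2 (Set.mem_Ici.2 hy0) hmemq ht0 ht1 (by ring)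
        have harg : t • qq + (1-t) • qbar = qbar - δ := by
          simp only [smul_eq_mul]
          linear_combination -htδ
        rw [harg] at hcomb
        simp only [smul_eq_mul] at hcomb
        -- c (qbar - δ) ≤ t * c qq + (1-t) * c qbar
        -- hence c qbar - c (qbar-δ) ≥ t * (c qbar - c qq)
        have h2 : t * (c qbar - c qq) ≤ c qbar - c (qbar - δ) := by linarith
        have h4 : δ * (c qbar - c qq) ≤ (c qbar - c (qbar - δ)) * (qbar - qq) := by
          have h5 := mul_le_mul_of_nonneg_right h2 (le_of_lt hqy)
          have h6 : t * (c qbar - c qq) * (qbar - qq) = δ * (c qbar - c qq) := by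
            linear_combination (c qbar - c qq) * htδ
          linarith [h5, h6]
        rw [hs_def, div_mul_eq_mul_div, le_div_iff₀ hδ0]
        nlinarith [h4]
    -- optimality gives (1-ε)(qbar - qq) ≤ c qbar - c qq
    have h5 : (1-ε) * (qbar - qq) ≤ c qbar - c qq := by nlinarith [hopt]
    have h6 : (1-ε) * (qbar - qq) ≤ s * (qbar - qq) := le_trans h5 hconv
    have h7 : 1 - ε ≤ s := by
      have hqy : 0 < qbar - qq := by linarith
      exact le_of_mul_le_mul_right (by nlinarith [h6]) hqy
    rw [hε_def] at h7
    linarith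
  have hqq0 : 0 < qq := by nlinarith
  -- profit values
  set p1 : ℝ := piFun c q (1-ε) with hp1_def
  set p2 : ℝ := piFun c q 1 with hp2_def
  have hq1mem := (hq 1).1
  have hgap : p2 - p1 ≤ ε * qbar := by
    have hopt := (hq (1-ε)).2 (q 1) hq1mem
    simp only [hp1_def, hp2_def, piFun] at *
    nlinarith [hq1mem.2, hε0]
  have hp12 : p1 ≤ p2 := by
    have hopt := (hq 1).2 (q (1-ε)) hqqmem
    simp only [hp1_def, hp2_def, piFun, ← hqq_def] at *
    nlinarith [hqq0]
  -- the competitor profile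
  set ψ : ℝ → ℝ := fun u => if u < a then 1 - ε else 1 with hψ_def
  have hψval1 : ∀ x, x < a → ψ x = 1 - ε := fun x hx => if_pos hx
  have hψval2 : ∀ x, a ≤ x → ψ x = 1 := fun x hx => if_neg (not_lt.2 hx)
  have hψmono : Monotone ψ := by
    intro x y hxy
    simp only [hψ_def]
    split_ifs with h1 h2 h2
    · exact le_refl _
    · linarith
    · exact absurd (lt_of_le_of_lt hxy h2) h1
    · exact le_refl _
  have hψint : ∀ x y : ℝ, IntervalIntegrable ψ volume x y := fun x y =>
    hψmono.intervalIntegrable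
  -- ae avoidance of single points
  have hae : ∀ b : ℝ, ∀ᵐ x : ℝ, x ≠ b := by
    intro b
    rw [MeasureTheory.ae_iff]
    have : {x : ℝ | ¬ x ≠ b} = {b} := by ext x; simp
    rw [this]
    exact measure_singleton b
  -- MemPhi ψ
  have hmem : MemPhi ψ := by
    refine ⟨?_, hψmono.monotoneOn _, ?_⟩
    · intro u _
      simp only [hψ_def]
      split_ifs
      · constructor <;> linarith
      · constructor <;> linarith
    · intro u hu
      by_cases hua : u < a
      · have hev : ψ =ᶠ[nhds u] fun _ => 1 - ε :=
          Filter.eventually_of_mem (isOpen_Iio.mem_nhds hua) (fun x hx => hψval1 x hx)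
        exact (continuousAt_const.congr hev.symm).continuousWithinAt
      · push_neg at hua
        exact continuousWithinAt_const.congr
          (fun y hy => hψval2 y (le_trans hua hy)) (hψval2 u hua)
  -- interval integral computations for ψ
  have hint_ua : ∀ u : ℝ, u ≤ a → (∫ t in u..a, ψ t) = (a - u) * (1 - ε) := by
    intro u hu
    have h1 : (∫ t in u..a, ψ t) = ∫ t in u..a, (1 - ε) := by
      apply intervalIntegral.integral_congr_ae
      filter_upwards [hae a] with x hxa hmem
      rw [Set.uIoc_of_le hu] at hmem
      exact hψval1 x (lt_of_le_of_ne hmem.2 hxa)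
    rw [h1, intervalIntegral.integral_const, smul_eq_mul]
  have hint_a1 : ∀ u : ℝ, a ≤ u → u ≤ 1 → (∫ t in u..1, ψ t) = 1 - u := by
    intro u hau hu1
    have h1 : (∫ t in u..1, ψ t) = ∫ t in u..1, (1:ℝ) := by
      apply intervalIntegral.integral_congr
      intro x hx
      rw [Set.uIcc_of_le hu1] at hx
      exact hψval2 x (le_trans hau hx.1)
    rw [h1, intervalIntegral.integral_const, smul_eq_mul, mul_one]
  have hQ1 : ∀ u : ℝ, 0 ≤ u → u < a → Qfun ψ u = ((a-u)*(1-ε) + (1-a))/(1-u) := by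
    intro u hu0 hua
    have hu1 : u < 1 := lt_trans hua ha1
    rw [Qfun, if_pos hu1]
    have hsplit : (∫ t in u..1, ψ t) = (∫ t in u..a, ψ t) + ∫ t in a..1, ψ t :=
      (intervalIntegral.integral_add_adjacent_intervals (hψint u a) (hψint a 1)).symm
    rw [hsplit, hint_ua u (le_of_lt hua), hint_a1 a (le_refl a) (le_of_lt ha1)]
  have hQ2 : ∀ u : ℝ, a ≤ u → u < 1 → Qfun ψ u = 1 := by
    intro u hau hu1
    rw [Qfun, if_pos hu1, hint_a1 u hau (le_of_lt hu1)]
    exact div_self (by linarith)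
  -- CS of ψ
  set g : ℝ → ℝ := fun u => if u ≤ a then ε*(1-a)/(1-u) * qq else 0 with hg_def
  have hCSg : CS q ψ = ∫ u in (0:ℝ)..1, g u := by
    rw [CS]
    apply intervalIntegral.integral_congr_ae
    filter_upwards [hae a, hae 1] with x hxa hx1 hmemx
    rw [Set.uIoc_of_le (by norm_num : (0:ℝ) ≤ 1)] at hmemx
    have hx1' : x < 1 := lt_of_le_of_ne hmemx.2 hx1
    by_cases hx : x < a
    · rw [hQ1 x (le_of_lt hmemx.1) hx, hψval1 x hx, hg_def]
      simp only [if_pos (le_of_lt hx), ← hqq_def]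
      have hne : (1:ℝ) - x ≠ 0 := by linarith
      rw [div_sub' hne]
      congr 2
      ring
    · push_neg at hx
      have hax : a < x := lt_of_le_of_ne hx (fun h => hxa h.symm)
      rw [hQ2 x hx hx1', hψval2 x hx, hg_def]
      simp only [if_neg (not_le.2 hax)]
      ring
  -- integrability of g on [0, a]
  have hgcont : ContinuousOn (fun u => ε*(1-a)/(1-u) * qq) (Set.Icc (0:ℝ) a) := by
    apply ContinuousOn.mul _ continuousOn_const
    apply ContinuousOn.div continuousOn_const
    · exact (continuous_const.sub continuous_id).continuousOn
    · intro x hx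
      have := hx.2
      intro hcon
      have : x = 1 := by linarith
      linarith [lt_of_le_of_lt hx.2 ha1]
  have hgint0a : IntervalIntegrable g volume 0 a := by
    apply ContinuousOn.intervalIntegrable
    rw [Set.uIcc_of_le (le_of_lt ha0)]
    apply hgcont.congr
    intro x hx
    rw [hg_def]
    simp only [if_pos hx.2]
  have hginta1 : IntervalIntegrable g volume a 1 := by
    apply IntervalIntegrable.congr_ae (f := fun _ => (0:ℝ)) intervalIntegrable_const
    rw [Filter.EventuallyEq, MeasureTheory.ae_restrict_iff' measurableSet_uIoc]
    filter_upwards [hae a] with x hxa hmemx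
    rw [Set.uIoc_of_le (le_of_lt ha1)] at hmemx
    rw [hg_def]
    simp only [if_neg (not_le.2 hmemx.1)]
  have hinta1g : (∫ u in a..1, g u) = 0 := by
    have h1 : (∫ u in a..1, g u) = ∫ u in a..1, (0:ℝ) := by
      apply intervalIntegral.integral_congr_ae
      filter_upwards [hae a] with x hxa hmemx
      rw [Set.uIoc_of_le (le_of_lt ha1)] at hmemx
      rw [hg_def]
      simp only [if_neg (not_le.2 hmemx.1)]
    rw [h1, intervalIntegral.integral_const, smul_zero]
  have hCSge : a * (ε * ((1-a) * qq)) ≤ CS q ψ := by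
    rw [hCSg]
    rw [← intervalIntegral.integral_add_adjacent_intervals hgint0a hginta1, hinta1g, add_zero]
    have hconst : (∫ _ in (0:ℝ)..a, ε * ((1-a) * qq)) = a * (ε * ((1-a) * qq)) := by
      rw [intervalIntegral.integral_const, smul_eq_mul, sub_zero]
    rw [← hconst]
    apply intervalIntegral.integral_mono_on (le_of_lt ha0)
      intervalIntegrable_const hgint0a
    intro x hx
    rw [hg_def]
    simp only [if_pos hx.2]
    have hx1 : 0 < 1 - x := by linarith [lt_of_le_of_lt hx.2 ha1]
    have h2 : ε * (1-a) ≤ ε * (1-a) / (1-x) := by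
      rw [le_div_iff₀ hx1]
      nlinarith [hx.1, mul_nonneg (mul_nonneg hε0.le (by linarith : (0:ℝ) ≤ 1-a)) hx.1]
    calc ε * ((1-a) * qq) = (ε * (1-a)) * qq := by ring
    _ ≤ (ε * (1-a)/(1-x)) * qq := mul_le_mul_of_nonneg_right h2 (le_of_lt hqq0)
  -- Profit of ψ
  have hPmono : Monotone (fun u => piFun c q (ψ u)) := by
    intro x y hxy
    simp only [hψ_def]
    split_ifs with h1 h2 h2
    · exact le_refl _
    · exact hp12
    · exact absurd (lt_of_le_of_lt hxy h2) h1
    · exact le_refl _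
  have hProfψ : Profit c q ψ = a * p1 + (1-a) * p2 := by
    rw [Profit]
    rw [← intervalIntegral.integral_add_adjacent_intervals
      (a := (0:ℝ)) (b := a) (c := 1)
      hPmono.intervalIntegrable hPmono.intervalIntegrable]
    have h1 : (∫ u in (0:ℝ)..a, piFun c q (ψ u)) = a * p1 := by
      have he : (∫ u in (0:ℝ)..a, piFun c q (ψ u)) = ∫ _ in (0:ℝ)..a, p1 := by
        apply intervalIntegral.integral_congr_ae
        filter_upwards [hae a] with x hxa hmemx
        rw [Set.uIoc_of_le (le_of_lt ha0)] at hmemx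
        rw [hψval1 x (lt_of_le_of_ne hmemx.2 hxa)]
      rw [he, intervalIntegral.integral_const, smul_eq_mul, sub_zero]
    have h2 : (∫ u in a..1, piFun c q (ψ u)) = (1-a) * p2 := by
      have he : (∫ u in a..1, piFun c q (ψ u)) = ∫ _ in a..1, p2 := by
        apply intervalIntegral.integral_congr
        intro x hx
        rw [Set.uIcc_of_le (le_of_lt ha1)] at hx
        show piFun c q (ψ x) = p2
        rw [hψval2 x hx.1]
      rw [he, intervalIntegral.integral_const, smul_eq_mul]
    rw [h1, h2]
  -- the constant one profile
  have hCS1 : CS q (fun _ => 1) = 0 := by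
    rw [CS]
    have h1 : (∫ u in (0:ℝ)..1, (Qfun (fun _ => (1:ℝ)) u - 1) * q 1)
        = ∫ u in (0:ℝ)..1, (0:ℝ) := by
      apply intervalIntegral.integral_congr_ae
      filter_upwards [hae 1] with x hx1 hmemx
      rw [Set.uIoc_of_le (by norm_num : (0:ℝ) ≤ 1)] at hmemx
      have hx1' : x < 1 := lt_of_le_of_ne hmemx.2 hx1
      rw [Qfun, if_pos hx1', intervalIntegral.integral_const, smul_eq_mul, mul_one,
        div_self (by linarith : (1:ℝ) - x ≠ 0)]
      ring
    rw [h1, intervalIntegral.integral_const, smul_zero]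
  have hProf1 : Profit c q (fun _ => 1) = p2 := by
    rw [Profit, hp2_def]
    rw [intervalIntegral.integral_const]
    norm_num
  -- final assembly
  refine ⟨ψ, hmem, ?_⟩
  rw [Jfun, Jfun, hCS1, hProf1, hProfψ]
  have t1 : (1-k) * qbar < k * ((1-a)*(1-a)) * qbar := mul_lt_mul_of_pos_right hkey hqbar
  have t2 : k * (1-a) * ((1-a) * qbar) < k * (1-a) * qq :=
    mul_lt_mul_of_pos_left hqq3 (mul_pos hk0 (by linarith))
  have t3 : (1-k) * qbar < k * ((1-a) * qq) := by nlinarith [t1, t2]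
  have t4 := mul_lt_mul_of_pos_left t3 (mul_pos ha0 hε0)
  have s1 : k * (a * (ε * ((1-a) * qq))) ≤ k * CS q ψ :=
    mul_le_mul_of_nonneg_left hCSge (le_of_lt hk0)
  have s2 : (1-k) * (a * (p2 - p1)) ≤ (1-k) * (a * (ε * qbar)) := by
    apply mul_le_mul_of_nonneg_left _ (by linarith)
    exact mul_le_mul_of_nonneg_left hgap (le_of_lt ha0)
  nlinarith [s1, s2, t4]

end Screening
end

section
/- Let c satisfy Assumption 1 and suppose in addition that c is thrice continuously differentiable on (0,∞) with −q·c'''(q)/c''(q) < 2 for all q ∈ (0,q̄]. Then lim_{q↓0} q·c''(q) = 0. -/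
open MeasureTheory Set Filter

namespace Screening

/-- Under Assumption 1 together with the curvature condition
(`c` thrice continuously differentiable on `(0,∞)` and `−q·c'''(q)/c''(q) < 2` on
`(0,q̄]`), one has `q·c''(q) → 0` as `q ↓ 0`. -/
theorem q_mul_second_deriv_tendsto_zero
    (c : ℝ → ℝ) (Qbar qbar : ℝ)
    (hA1 : Assumption1 c Qbar qbar)
    (h3 : ContDiffOn ℝ 3 c (Set.Ioi 0))
    (hcurv : ∀ x ∈ Set.Ioc (0:ℝ) qbar,
      -x * deriv (deriv (deriv c)) x / deriv (deriv c) x < 2) :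
    Tendsto (fun x => x * deriv (deriv c) x) (nhdsWithin 0 (Set.Ioi 0)) (nhds 0) := by
  have hO : IsOpen (Set.Ioi (0:ℝ)) := isOpen_Ioi
  -- differentiability facts
  have hdiff_c : ∀ x ∈ Set.Ioi (0:ℝ), DifferentiableAt ℝ c x := fun x hx =>
    ((h3.differentiableOn (by norm_num)).differentiableAt (hO.mem_nhds hx))
  have hd2 : ContDiffOn ℝ 2 (deriv c) (Set.Ioi 0) := h3.deriv_of_isOpen hO (by norm_num)
  have hd1 : ContDiffOn ℝ 1 (deriv (deriv c)) (Set.Ioi 0) := hd2.deriv_of_isOpen hO (by norm_num)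
  have cont2 : ContinuousOn (deriv (deriv c)) (Set.Ioi 0) := hd1.continuousOn
  have hasD2 : ∀ x ∈ Set.Ioi (0:ℝ), HasDerivAt (deriv c) (deriv (deriv c) x) x := fun x hx =>
    ((hd2.differentiableOn (by norm_num)).differentiableAt (hO.mem_nhds hx)).hasDerivAt
  have hasD3 : ∀ x ∈ Set.Ioi (0:ℝ),
      HasDerivAt (deriv (deriv c)) (deriv (deriv (deriv c)) x) x := fun x hx =>
    ((hd1.differentiableOn (by norm_num)).differentiableAt (hO.mem_nhds hx)).hasDerivAt
  -- c'' > 0 on (0, qbar]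
  have hpos2 : ∀ x ∈ Set.Ioc (0:ℝ) qbar, 0 < deriv (deriv c) x := fun x hx =>
    hA1.second_deriv_pos x ⟨hx.1, hx.2.trans hA1.qbar_lt_Qbar.le⟩
  -- g(t) = t^2 c''(t) is monotone on (0, qbar]
  set g : ℝ → ℝ := fun t => t ^ 2 * deriv (deriv c) t with hg
  have gmono : MonotoneOn g (Set.Ioc 0 qbar) := by
    have : StrictMonoOn g (Set.Ioc 0 qbar) := by
      apply strictMonoOn_of_deriv_pos (convex_Ioc 0 qbar)
      · exact (continuousOn_id.pow 2).mul (cont2.mono Set.Ioc_subset_Ioi_self)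
      · intro x hx
        rw [interior_Ioc] at hx
        have hx0 : (0:ℝ) < x := hx.1
        have hxI : x ∈ Set.Ioc (0:ℝ) qbar := ⟨hx.1, hx.2.le⟩
        have h1 : HasDerivAt (fun t : ℝ => t ^ 2) (2 * x) x := by
          simpa using (hasDerivAt_pow 2 x)
        have hgd : HasDerivAt g
            (2 * x * deriv (deriv c) x + x ^ 2 * deriv (deriv (deriv c)) x) x :=
          h1.mul (hasD3 x hx.1)
        rw [hgd.deriv]
        have h2 : 0 < deriv (deriv c) x := hpos2 x hxI
        have h4 : -x * deriv (deriv (deriv c)) x < 2 * deriv (deriv c) x := by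
          have := hcurv x hxI
          calc -x * deriv (deriv (deriv c)) x
              = (-x * deriv (deriv (deriv c)) x / deriv (deriv c) x) * deriv (deriv c) x := by
                field_simp
            _ < 2 * deriv (deriv c) x := by
                exact mul_lt_mul_of_pos_right this h2
        have h5 : 0 < 2 * deriv (deriv c) x + x * deriv (deriv (deriv c)) x := by linarith
        have : 2 * x * deriv (deriv c) x + x ^ 2 * deriv (deriv (deriv c)) x
            = x * (2 * deriv (deriv c) x + x * deriv (deriv (deriv c)) x) := by ring
        rw [this]
        exact mul_pos hx0 h5
    exact this.monotoneOn
  -- key inequality : x * c''(x) ≤ 4 * (c'(2x) - c'(x)) for x ∈ Ioo 0 (qbar/2)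
  have key : ∀ x ∈ Set.Ioo (0:ℝ) (qbar / 2),
      x * deriv (deriv c) x ≤ 4 * (deriv c (2 * x) - deriv c x) := by
    intro x hx
    have hx0 : (0:ℝ) < x := hx.1
    have h2x : 2 * x ≤ qbar := by linarith [hx.2]
    have hIcc : Set.Icc x (2 * x) ⊆ Set.Ioi (0:ℝ) := fun t ht => lt_of_lt_of_le hx0 ht.1
    have hle : x ≤ 2 * x := by linarith
    have hftc : ∫ t in x..(2 * x), deriv (deriv c) t = deriv c (2 * x) - deriv c x := by
      apply intervalIntegral.integral_eq_sub_of_hasDerivAt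
      · intro t ht
        rw [Set.uIcc_of_le hle] at ht
        exact hasD2 t (hIcc ht)
      · apply ContinuousOn.intervalIntegrable
        rw [Set.uIcc_of_le hle]
        exact cont2.mono hIcc
    have hlb : ∀ t ∈ Set.Icc x (2 * x), deriv (deriv c) x / 4 ≤ deriv (deriv c) t := by
      intro t ht
      have ht0 : (0:ℝ) < t := hIcc ht
      have htI : t ∈ Set.Ioc (0:ℝ) qbar := ⟨ht0, ht.2.trans h2x⟩
      have hxI : x ∈ Set.Ioc (0:ℝ) qbar := ⟨hx0, by linarith [hx.2]⟩
      have hgle : g x ≤ g t := gmono hxI htI ht.1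
      have htpos : 0 < deriv (deriv c) t := hpos2 t htI
      have ht2 : t ^ 2 ≤ (2 * x) ^ 2 := by nlinarith [ht.2, ht0.le]
      have : x ^ 2 * deriv (deriv c) x ≤ (2 * x) ^ 2 * deriv (deriv c) t := by
        calc x ^ 2 * deriv (deriv c) x ≤ t ^ 2 * deriv (deriv c) t := hgle
          _ ≤ (2 * x) ^ 2 * deriv (deriv c) t := by nlinarith
      have hx2 : (0:ℝ) < x ^ 2 := pow_pos hx0 2
      have h6 : x ^ 2 * deriv (deriv c) x ≤ x ^ 2 * (4 * deriv (deriv c) t) := by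
        calc x ^ 2 * deriv (deriv c) x ≤ (2 * x) ^ 2 * deriv (deriv c) t := this
          _ = x ^ 2 * (4 * deriv (deriv c) t) := by ring
      have h7 := (mul_le_mul_iff_of_pos_left hx2).mp h6
      linarith
    have hmono : (∫ t in x..(2 * x), deriv (deriv c) x / 4)
        ≤ ∫ t in x..(2 * x), deriv (deriv c) t := by
      apply intervalIntegral.integral_mono_on hle
      · exact intervalIntegrable_const
      · apply ContinuousOn.intervalIntegrable
        rw [Set.uIcc_of_le hle]
        exact cont2.mono hIcc
      · exact hlb
    rw [intervalIntegral.integral_const] at hmono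
    have : (2 * x - x) • (deriv (deriv c) x / 4) = x * deriv (deriv c) x / 4 := by
      simp [smul_eq_mul]; ring
    rw [this, hftc] at hmono
    linarith
  -- deriv c is monotone on Ioo 0 qbar and bounded below, hence has a limit M at 0+
  have hconvIoi : StrictConvexOn ℝ (Set.Ioi (0:ℝ)) c :=
    hA1.strictConvex.subset (fun x hx => Set.mem_Ici.mpr (le_of_lt (Set.mem_Ioi.mp hx))) (convex_Ioi 0)
  have hmonoDeriv : StrictMonoOn (deriv c) (Set.Ioi 0) :=
    hconvIoi.strictMonoOn_deriv hdiff_c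
  have hderivpos : ∀ y ∈ Set.Ioi (0:ℝ), 0 < deriv c y := by
    intro y hy
    have hy0 : (0:ℝ) < y := hy
    have hslope : slope c 0 y < deriv c y :=
      hA1.strictConvex.slope_lt_deriv (Set.self_mem_Ici) (le_of_lt hy0) hy0 (hdiff_c y hy)
    have hcy : 0 < c y := by
      have := hA1.strictMono (Set.self_mem_Ici) (le_of_lt hy0) hy0
      rwa [hA1.zero_val] at this
    have : 0 < slope c 0 y := by
      rw [slope_def_field, hA1.zero_val]
      apply div_pos <;> linarith
    linarith
  have hne : (Set.Ioo (0:ℝ) qbar).Nonempty := ⟨qbar / 2, by constructor <;> linarith [hA1.qbar_pos]⟩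
  have hbdd : BddBelow (deriv c '' Set.Ioo 0 qbar) := by
    refine ⟨0, ?_⟩
    rintro _ ⟨a, ha, rfl⟩
    exact (hderivpos a ha.1).le
  have hlim : Tendsto (deriv c) (nhdsWithin 0 (Set.Ioi 0))
      (nhds (sInf (deriv c '' Set.Ioo 0 qbar))) :=
    MonotoneOn.tendsto_nhdsWithin_Ioo_right hne
      ((hmonoDeriv.monotoneOn).mono (fun t ht => ht.1)) hbdd
  set M := sInf (deriv c '' Set.Ioo 0 qbar) with hM
  have hdouble : Tendsto (fun x : ℝ => 2 * x) (nhdsWithin 0 (Set.Ioi 0))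
      (nhdsWithin 0 (Set.Ioi 0)) := by
    apply tendsto_nhdsWithin_of_tendsto_nhds_of_eventually_within
    · have : Tendsto (fun x : ℝ => 2 * x) (nhds 0) (nhds 0) := by
        simpa using (continuous_mul_left (2:ℝ)).tendsto (0:ℝ)
      exact this.mono_left nhdsWithin_le_nhds
    · filter_upwards [self_mem_nhdsWithin] with x hx
      exact Set.mem_Ioi.mpr (mul_pos two_pos (Set.mem_Ioi.mp hx))
  have hub : Tendsto (fun x => 4 * (deriv c (2 * x) - deriv c x))
      (nhdsWithin 0 (Set.Ioi 0)) (nhds 0) := by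
    have : Tendsto (fun x => 4 * (deriv c (2 * x) - deriv c x))
        (nhdsWithin 0 (Set.Ioi 0)) (nhds (4 * (M - M))) :=
      (tendsto_const_nhds.mul ((hlim.comp hdouble).sub hlim))
    simpa using this
  -- squeeze
  have hmem : Set.Ioo (0:ℝ) (qbar / 2) ∈ nhdsWithin (0:ℝ) (Set.Ioi 0) :=
    Ioo_mem_nhdsGT (by linarith [hA1.qbar_pos])
  apply tendsto_of_tendsto_of_tendsto_of_le_of_le' tendsto_const_nhds hub
  · filter_upwards [hmem] with x hx
    exact (mul_pos hx.1 (hpos2 x ⟨hx.1, by linarith [hx.2, hA1.qbar_pos]⟩)).le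
  · filter_upwards [hmem] with x hx
    exact key x hx

end Screening
end

section
/- Fix λ ∈ (0,1]. Let c satisfy Assumptions 1 and 2, let I ⊆ (0,q̄] be an interval, and let A ≥ 0 satisfy A ≤ λ·z for all z ∈ I. Then the map z ↦ H(A,z) := c'(z) + c''(z)·(λ·z − A) is strictly increasing on I; in particular its derivative (1+λ)·c''(z) + (λ·z − A)·c'''(z) is strictly positive for all z ∈ I. -/
open MeasureTheory Set Filter

namespace Screening

/-- Under Assumptions 1 and 2, for `λ ∈ (0,1]`, an interval
`I ⊆ (0,q̄]`, and `A ≥ 0` with `A ≤ λ·z` for all `z ∈ I`, the map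
`z ↦ H(A,z) = c'(z) + c''(z)(λz − A)` is strictly increasing on `I`; in particular
its derivative `(1+λ)c''(z) + (λz − A)c'''(z)` is strictly positive on `I`. -/
theorem H_strictMono_on_interval
    (c : ℝ → ℝ) (Qbar qbar : ℝ)
    (hA1 : Assumption1 c Qbar qbar)
    (hA2 : Assumption2 c qbar)
    (lam : ℝ) (hlam : lam ∈ Set.Ioc (0:ℝ) 1)
    (I : Set ℝ) (hI : I ⊆ Set.Ioc 0 qbar) (hIintv : I.OrdConnected)
    (A : ℝ) (hA : 0 ≤ A) (hAz : ∀ z ∈ I, A ≤ lam * z) :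
    StrictMonoOn (fun z => deriv c z + deriv (deriv c) z * (lam * z - A)) I ∧
    ∀ z ∈ I, 0 < (1 + lam) * deriv (deriv c) z
        + (lam * z - A) * deriv (deriv (deriv c)) z := by
  -- regularity of derivatives on the open set (0,∞)
  have h1 : ContDiffOn ℝ 2 (deriv c) (Set.Ioi 0) :=
    hA2.contDiff3.deriv_of_isOpen isOpen_Ioi (by norm_num)
  have h2 : ContDiffOn ℝ 1 (deriv (deriv c)) (Set.Ioi 0) :=
    h1.deriv_of_isOpen isOpen_Ioi (by norm_num)
  have hd1 : ∀ x ∈ Set.Ioi (0:ℝ), DifferentiableAt ℝ (deriv c) x := fun x hx =>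
    ((h1.differentiableOn (by norm_num)).differentiableAt (isOpen_Ioi.mem_nhds hx))
  have hd2 : ∀ x ∈ Set.Ioi (0:ℝ), DifferentiableAt ℝ (deriv (deriv c)) x := fun x hx =>
    ((h2.differentiableOn (by norm_num)).differentiableAt (isOpen_Ioi.mem_nhds hx))
  -- positivity of the derivative on I
  have hpos : ∀ z ∈ I, 0 < (1 + lam) * deriv (deriv c) z
      + (lam * z - A) * deriv (deriv (deriv c)) z := by
    intro z hz
    obtain ⟨hz0, hzq⟩ := hI hz
    have hc2 : 0 < deriv (deriv c) z :=
      hA1.second_deriv_pos z ⟨hz0, hzq.trans hA1.qbar_lt_Qbar.le⟩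
    have hcurv := hA2.curvature z ⟨hz0, hzq⟩
    have hcurv' : -z * deriv (deriv (deriv c)) z < 2 * deriv (deriv c) z :=
      (div_lt_iff₀ hc2).mp hcurv
    have hB0 : 0 ≤ lam * z - A := sub_nonneg.2 (hAz z hz)
    have hBle : lam * z - A ≤ lam * z := by linarith
    rcases le_or_gt 0 (deriv (deriv (deriv c)) z) with h3 | h3
    · have := mul_nonneg hB0 h3
      nlinarith
    · have h1' : (lam * z - A) * deriv (deriv (deriv c)) z ≥
          (lam * z) * deriv (deriv (deriv c)) z :=
        mul_le_mul_of_nonpos_right hBle h3.le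
      have h2' : lam * (z * deriv (deriv (deriv c)) z) >
          lam * (-2 * deriv (deriv c) z) := by
        apply mul_lt_mul_of_pos_left _ hlam.1
        linarith
      nlinarith [hlam.2, hc2]
  refine ⟨?_, hpos⟩
  -- strict monotonicity via positive derivative
  have hIconv : Convex ℝ I := hIintv.convex
  have hderiv : ∀ x ∈ I, HasDerivAt (fun z => deriv c z + deriv (deriv c) z * (lam * z - A))
      ((1 + lam) * deriv (deriv c) x + (lam * x - A) * deriv (deriv (deriv c)) x) x := by
    intro x hx
    have hx0 : x ∈ Set.Ioi (0:ℝ) := (hI hx).1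
    have H1 : HasDerivAt (deriv c) (deriv (deriv c) x) x := (hd1 x hx0).hasDerivAt
    have H2 : HasDerivAt (deriv (deriv c)) (deriv (deriv (deriv c)) x) x :=
      (hd2 x hx0).hasDerivAt
    have Hlin : HasDerivAt (fun z : ℝ => lam * z - A) lam x := by
      simpa using ((hasDerivAt_id x).const_mul lam).sub_const A
    have : HasDerivAt (fun z => deriv c z + deriv (deriv c) z * (lam * z - A))
        (deriv (deriv c) x + (deriv (deriv (deriv c)) x * (lam * x - A) + deriv (deriv c) x * lam)) x :=
      H1.add (H2.mul Hlin)
    convert this using 1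
    ring
  apply StrictMonoOn.mono ?_ (subset_refl I)
  exact strictMonoOn_of_hasDerivWithinAt_pos hIconv
    (fun x hx => (hderiv x hx).continuousAt.continuousWithinAt)
    (fun x hx => ((hderiv x (interior_subset hx)).hasDerivWithinAt))
    (fun x hx => hpos x (interior_subset hx))

end Screening
end
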